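/- For death-birth updating on the cycle with r ≥ 1, every non-absorbing state s with 1 < |s| < N−1 mutants satisfies 1 ≤ γ(s) ≤ r, where r is the bias of the single-cluster configuration with the same number of mutants. -/

import Mathlib

/-- The death-birth forward bias on the cycle:
`γ = (xB + (2r/(1+r))·yB)/(xA + (2/(1+r))·yA)`. -/
noncomputable def dbBias (r : ℝ) (xA yA xB yB : ℕ) : ℝ :=
  ((xB : ℝ) + (2 * r / (1 + r)) * yB) / ((xA : ℝ) + (2 / (1 + r)) * yA)

/-- For death-birth updating on the cycle with `r ≥ 1`, every non-absorbing state with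
`1 < m < N−1` mutants satisfies `1 ≤ γ(s) ≤ r`, where `r` is the bias of the
single-cluster configuration (`xA = xB = 0`, `yA = yB = 1`) with the same number of
mutants. -/
theorem db_bias_bounds_advantageous (N m xA yA xB yB : ℕ) (r : ℝ)
    (hr : 1 ≤ r)
    (hm1 : 1 < m) (hm2 : m < N - 1)
    (hclusters : xA + yA = xB + yB) (hcl1 : 1 ≤ xA + yA)
    (hsizeA : xA + 2 * yA ≤ m) (hsizeB : xB + 2 * yB ≤ N - m) :
    (1 ≤ dbBias r xA yA xB yB ∧ dbBias r xA yA xB yB ≤ r) ∧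
      dbBias r 0 1 0 1 = r := by
  have hr0 : (0:ℝ) < 1 + r := by linarith
  have hrne : (1:ℝ) + r ≠ 0 := ne_of_gt hr0
  have hc0 : (0:ℝ) < 2 / (1 + r) := by positivity
  have hc1 : 2 / (1 + r) ≤ 1 := by rw [div_le_one hr0]; linarith
  have hcr1 : (1:ℝ) ≤ 2 * r / (1 + r) := by
    rw [le_div_iff₀ hr0]; linarith
  have hcr2 : 2 * r / (1 + r) ≤ r := by
    rw [div_le_iff₀ hr0]; nlinarith
  have hclR : (xA:ℝ) + yA = (xB:ℝ) + yB := by exact_mod_cast hclusters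
  have hclR1 : (1:ℝ) ≤ (xA:ℝ) + yA := by exact_mod_cast hcl1
  have hyA : (0:ℝ) ≤ (yA:ℝ) := Nat.cast_nonneg _
  have hxA : (0:ℝ) ≤ (xA:ℝ) := Nat.cast_nonneg _
  have hyB : (0:ℝ) ≤ (yB:ℝ) := Nat.cast_nonneg _
  have hxB : (0:ℝ) ≤ (xB:ℝ) := Nat.cast_nonneg _
  have hD : (0:ℝ) < (xA:ℝ) + (2 / (1 + r)) * yA := by
    nlinarith [mul_le_of_le_one_left hxA hc1]
  refine ⟨⟨?_, ?_⟩, ?_⟩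
  · rw [dbBias, one_le_div hD]
    nlinarith [mul_le_of_le_one_left hyA hc1, mul_le_mul_of_nonneg_right hcr1 hyB]
  · rw [dbBias, div_le_iff₀ hD, ← mul_le_mul_iff_of_pos_right hr0]
    field_simp
    ring_nf
    nlinarith [mul_nonneg (sub_nonneg.mpr hr) hxA, mul_nonneg (sub_nonneg.mpr hr) hxB,
      mul_nonneg (mul_nonneg (sub_nonneg.mpr hr) hxA) (le_trans zero_le_one hr), hclR]
  · simp only [dbBias, Nat.cast_zero, Nat.cast_one]
    field_simp
    ring
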